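/- Let n ≥ 1 and r ≥ 0, let F be the free group on generators γ₁, …, γ_{r+1}, and let φ : F → ℤ/nℤ be the homomorphism with φ(γ_i) = 0 for 1 ≤ i ≤ r and φ(γ_{r+1}) = 1. Then the kernel of φ is a free group of rank nr + 1, freely generated by the nr + 1 elements γ_{r+1}^{-j} γ_i γ_{r+1}^{j} for 1 ≤ i ≤ r and 0 ≤ j ≤ n−1, together with γ_{r+1}^{n}. (This is the algebraic content of the statement that if (γ₁, …, γ_{r+1}) is a geometric basis of π₁(ℂ∖B̃) with γ_{r+1} a meridian of 0, then the listed elements form a geometric basis of the fundamental group of the n-fold cyclic cover of ℂ∖B̃ branched over the corresponding punctures.) -/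

import Mathlib

open FreeGroup SemidirectProduct Multiplicative

namespace KummerAux

/-- The shift automorphism on the free group on `X × ℤ`, sending `(x, j)` to `(x, j - 1)`. -/
def shiftE (X : Type*) : MulAut (FreeGroup (X × ℤ)) :=
  FreeGroup.freeGroupCongr (Equiv.prodCongr (Equiv.refl X) (Equiv.addRight (-1 : ℤ)))

/-- The action of `ℤ` on the free group on `X × ℤ` by shifting. -/
def sig (X : Type*) : Multiplicative ℤ →* MulAut (FreeGroup (X × ℤ)) where
  toFun g := FreeGroup.freeGroupCongr (Equiv.prodCongr (Equiv.refl X) (Equiv.addRight (-(toAdd g) : ℤ)))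
  map_one' := by
    ext <;> simp
  map_mul' g h := by
    apply MulEquiv.toMonoidHom_injective
    apply FreeGroup.ext_hom
    rintro ⟨x, j⟩
    simp [MulAut.mul_def, MulEquiv.trans_apply]
    congr 1
    ring

@[simp] lemma sig_of (X : Type*) (g : Multiplicative ℤ) (x : X) (j : ℤ) :
    sig X g (FreeGroup.of (x, j)) = FreeGroup.of (x, j - toAdd g) := by
  simp [sig, sub_eq_add_neg]

end KummerAux

namespace KummerAux

variable (X : Type*)

/-- The canonical map from the free group on `X ⊕ Unit` to the semidirect product. -/
def theta : FreeGroup (X ⊕ Unit) →* FreeGroup (X × ℤ) ⋊[sig X] Multiplicative ℤ :=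
  FreeGroup.lift (Sum.elim (fun x => SemidirectProduct.inl (FreeGroup.of (x, (0 : ℤ))))
    (fun _ => SemidirectProduct.inr (ofAdd 1)))

/-- The generator of the `Unit` factor. -/
def T : FreeGroup (X ⊕ Unit) := FreeGroup.of (Sum.inr ())

/-- Retraction on the normal part. -/
def rho₁ : FreeGroup (X × ℤ) →* FreeGroup (X ⊕ Unit) :=
  FreeGroup.lift (fun p => T X ^ (-p.2) * FreeGroup.of (Sum.inl p.1) * T X ^ p.2)

lemma rho_compat : ∀ g, (rho₁ X).comp ((sig X) g).toMonoidHom =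
    (MulAut.conj ((zpowersHom _ (T X)) g)).toMonoidHom.comp (rho₁ X) := by
  intro g
  apply FreeGroup.ext_hom
  rintro ⟨x, j⟩
  simp [rho₁, MulAut.conj]
  group

/-- Retraction. -/
def rho : (FreeGroup (X × ℤ) ⋊[sig X] Multiplicative ℤ) →* FreeGroup (X ⊕ Unit) :=
  SemidirectProduct.lift (rho₁ X) (zpowersHom _ (T X)) (rho_compat X)

lemma rho_comp_theta : (rho X).comp (theta X) = MonoidHom.id _ := by
  apply FreeGroup.ext_hom
  rintro (x | u) <;> simp [theta, rho, rho₁, T]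

lemma theta_injective : Function.Injective (theta X) := by
  have h : Function.LeftInverse (rho X) (theta X) := fun a =>
    DFunLike.congr_fun (rho_comp_theta X) a
  exact h.injective

end KummerAux

namespace KummerAux

/-- `Fin n × ℤ ≃ ℤ` via `(s, q) ↦ s + n q`. -/
def finIntEquiv (n : ℕ) (hn : 0 < n) : Fin n × ℤ ≃ ℤ where
  toFun p := (p.1 : ℤ) + n * p.2
  invFun j := (⟨(j % n).toNat, by
      have h1 : (0:ℤ) ≤ j % n := Int.emod_nonneg j (by exact_mod_cast hn.ne')
      have h2 : j % n < n := Int.emod_lt_of_pos j (by exact_mod_cast hn)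
      omega⟩, j / n)
  left_inv := by
    rintro ⟨s, q⟩
    have hs : ((s : ℤ) + n * q) % n = s := by
      rw [Int.add_mul_emod_self_left]
      exact Int.emod_eq_of_lt (by positivity) (by exact_mod_cast s.2)
    have hq : ((s : ℤ) + n * q) / n = q := by
      rw [Int.add_mul_ediv_left _ _ (by exact_mod_cast hn.ne' : (n:ℤ) ≠ 0),
        Int.ediv_eq_zero_of_lt (by positivity) (by exact_mod_cast s.2), zero_add]
    ext
    · simp [hs]
    · simp [hq]
  right_inv := by
    intro j
    have h1 : (0:ℤ) ≤ j % n := Int.emod_nonneg j (by exact_mod_cast hn.ne')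
    simp only [Int.toNat_of_nonneg h1]
    rw [Int.emod_add_mul_ediv]

variable (X : Type*) (n : ℕ) (hn : 0 < n)

/-- Reindexing equivalence. -/
def eY : ((X × Fin n) × ℤ) ≃ (X × ℤ) :=
  (Equiv.prodAssoc X (Fin n) ℤ).trans (Equiv.prodCongr (Equiv.refl X) (finIntEquiv n hn))

@[simp] lemma eY_apply (x : X) (s : Fin n) (q : ℤ) :
    eY X n hn ((x, s), q) = (x, (s : ℤ) + n * q) := rfl

lemma inr_conj_inl {X : Type*} (u : Multiplicative ℤ) (v : FreeGroup (X × ℤ)) :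
    (SemidirectProduct.inr (φ := sig X)) u * SemidirectProduct.inl v *
      ((SemidirectProduct.inr (φ := sig X)) u)⁻¹ = SemidirectProduct.inl ((sig X) u v) := by
  rw [← _root_.map_inv]
  exact (SemidirectProduct.inl_aut u v).symm

lemma inr_one_zpow (k : ℤ) :
    (SemidirectProduct.inr (ofAdd (1:ℤ)) : FreeGroup (X × ℤ) ⋊[sig X] Multiplicative ℤ) ^ k =
      SemidirectProduct.inr (ofAdd k) := by
  rw [← _root_.map_zpow]
  congr 1
  rw [← ofAdd_zsmul]
  simp

lemma inr_one_pow (k : ℕ) :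
    (SemidirectProduct.inr (ofAdd (1:ℤ)) : FreeGroup (X × ℤ) ⋊[sig X] Multiplicative ℤ) ^ k =
      SemidirectProduct.inr (ofAdd (k:ℤ)) := by
  rw [← _root_.map_pow]
  congr 1
  rw [← ofAdd_nsmul]
  simp

lemma inr_conj_inl_of (k : ℤ) (x : X) :
    (SemidirectProduct.inr (ofAdd (-k)) : FreeGroup (X × ℤ) ⋊[sig X] Multiplicative ℤ) *
      SemidirectProduct.inl (FreeGroup.of (x, (0:ℤ))) * SemidirectProduct.inr (ofAdd k) =
      SemidirectProduct.inl (FreeGroup.of (x, k)) := by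
  have h : (SemidirectProduct.inr (ofAdd k) :
      FreeGroup (X × ℤ) ⋊[sig X] Multiplicative ℤ) = (SemidirectProduct.inr (ofAdd (-k)))⁻¹ := by
    rw [← _root_.map_inv]
    norm_num
  rw [h, inr_conj_inl, sig_of]
  norm_num

lemma mu_compat : ∀ g, ((SemidirectProduct.inl (φ := sig X)).comp
      (FreeGroup.freeGroupCongr (eY X n hn)).toMonoidHom).comp ((sig (X × Fin n)) g).toMonoidHom =
    (MulAut.conj ((SemidirectProduct.inr (φ := sig X)) ((zpowersHom _ (ofAdd (n:ℤ))) g))).toMonoidHom.comp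
      ((SemidirectProduct.inl (φ := sig X)).comp (FreeGroup.freeGroupCongr (eY X n hn)).toMonoidHom) := by
  intro g
  apply FreeGroup.ext_hom
  rintro ⟨⟨x, s⟩, q⟩
  simp only [MonoidHom.coe_comp, Function.comp_apply, MulEquiv.coe_toMonoidHom,
    MulAut.conj_apply, inr_conj_inl]
  simp only [sig_of]
  rw [zpowersHom_apply,
    show ((ofAdd (n:ℤ)) ^ (toAdd g) : Multiplicative ℤ) = ofAdd (toAdd g * (n:ℤ)) by
      rw [← ofAdd_zsmul]; simp [smul_eq_mul]]
  simp only [FreeGroup.freeGroupCongr_apply, FreeGroup.map.of, eY_apply, sig_of, toAdd_ofAdd]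
  congr 2
  ring

/-- The injection of semidirect products. -/
def mu : (FreeGroup ((X × Fin n) × ℤ) ⋊[sig (X × Fin n)] Multiplicative ℤ) →*
    (FreeGroup (X × ℤ) ⋊[sig X] Multiplicative ℤ) :=
  SemidirectProduct.lift
    ((SemidirectProduct.inl (φ := sig X)).comp (FreeGroup.freeGroupCongr (eY X n hn)).toMonoidHom)
    ((SemidirectProduct.inr (φ := sig X)).comp (zpowersHom _ (ofAdd (n:ℤ))))
    (mu_compat X n hn)

lemma mu_apply (a : FreeGroup ((X × Fin n) × ℤ)) (g : Multiplicative ℤ) :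
    mu X n hn ⟨a, g⟩ = ⟨FreeGroup.freeGroupCongr (eY X n hn) a, (zpowersHom _ (ofAdd (n:ℤ))) g⟩ := by
  have h : (⟨a, g⟩ : FreeGroup ((X × Fin n) × ℤ) ⋊[sig (X × Fin n)] Multiplicative ℤ)
      = SemidirectProduct.inl a * SemidirectProduct.inr g := by
    rw [← SemidirectProduct.inl_left_mul_inr_right ⟨a, g⟩]
  rw [h, _root_.map_mul]
  simp only [mu, SemidirectProduct.lift_inl, SemidirectProduct.lift_inr, MonoidHom.comp_apply,
    MulEquiv.coe_toMonoidHom]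
  exact SemidirectProduct.inl_left_mul_inr_right ⟨_, _⟩

lemma mu_injective : Function.Injective (mu X n hn) := by
  rintro ⟨a1, a2⟩ ⟨b1, b2⟩ hab
  rw [mu_apply, mu_apply] at hab
  have h1 := congrArg SemidirectProduct.left hab
  have h2 := congrArg SemidirectProduct.right hab
  simp only [zpowersHom_apply] at h1 h2
  have e1 : a1 = b1 := (FreeGroup.freeGroupCongr (eY X n hn)).injective h1
  have e2 : a2 = b2 := by
    have h3 := congrArg toAdd h2
    simp only [toAdd_zpow, toAdd_ofAdd, smul_eq_mul] at h3
    have hn' : (n : ℤ) ≠ 0 := by exact_mod_cast hn.ne'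
    exact toAdd.injective (mul_right_cancel₀ hn' h3)
  simp [e1, e2]

end KummerAux

open KummerAux

/-- The claimed free basis of the kernel: the `n·r + 1` elements
`γ_{r+1}^{-j} γ_i γ_{r+1}^{j}` (for `1 ≤ i ≤ r`, `0 ≤ j ≤ n − 1`) together with
`γ_{r+1}^{n}`, inside the free group on `γ_1, …, γ_{r+1}` (indexed by `Fin (r+1)`,
with `γ_{r+1}` the last generator). -/
def kummerBasis (n r : ℕ) : Fin r × Fin n ⊕ Unit → FreeGroup (Fin (r + 1))
  | Sum.inl (i, j) =>
      (FreeGroup.of (Fin.last r)) ^ (-((j : ℕ) : ℤ)) * FreeGroup.of i.castSucc *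
        (FreeGroup.of (Fin.last r)) ^ ((j : ℕ) : ℤ)
  | Sum.inr _ => (FreeGroup.of (Fin.last r)) ^ n

/-- Let `F` be the free group on `γ_1, …, γ_{r+1}` and `φ : F → ℤ/nℤ` the homomorphism
sending `γ_i ↦ 0` for `i ≤ r` and `γ_{r+1} ↦ 1`.  Then the kernel of `φ` is free of rank
`n·r + 1`, freely generated by the elements `γ_{r+1}^{-j} γ_i γ_{r+1}^{j}`
(`1 ≤ i ≤ r`, `0 ≤ j ≤ n−1`) together with `γ_{r+1}^{n}`: the homomorphism from the free
group on `n·r + 1` generators induced by these elements is injective with image `ker φ`. -/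
theorem kummer_kernel_free_basis (n r : ℕ) (hn : 1 ≤ n)
    (φ : FreeGroup (Fin (r + 1)) →* Multiplicative (ZMod n))
    (hφ : ∀ i : Fin (r + 1), φ (FreeGroup.of i) =
      Multiplicative.ofAdd (if (i : ℕ) < r then (0 : ZMod n) else 1)) :
    Function.Injective (FreeGroup.lift (kummerBasis n r)) ∧
      (FreeGroup.lift (kummerBasis n r)).range = φ.ker := by
  have hn' : 0 < n := hn
  set L : FreeGroup (Fin r × Fin n ⊕ Unit) →* FreeGroup (Fin (r+1)) :=
    FreeGroup.lift (kummerBasis n r) with hLdef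
  set t : FreeGroup (Fin (r+1)) := FreeGroup.of (Fin.last r) with htdef
  -- the comparison homomorphism
  set Ψ : FreeGroup (Fin (r+1)) →*
      (FreeGroup (Fin r × ℤ) ⋊[sig (Fin r)] Multiplicative ℤ) :=
    FreeGroup.lift (Fin.lastCases (SemidirectProduct.inr (ofAdd 1))
      (fun i => SemidirectProduct.inl (FreeGroup.of (i, (0:ℤ))))) with hΨdef
  have hΨt : Ψ t = SemidirectProduct.inr (ofAdd 1) := by
    rw [hΨdef, htdef, FreeGroup.lift_apply_of, Fin.lastCases_last]
  have hΨg : ∀ i : Fin r, Ψ (FreeGroup.of i.castSucc) =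
      SemidirectProduct.inl (FreeGroup.of (i, (0:ℤ))) := by
    intro i
    rw [hΨdef, FreeGroup.lift_apply_of, Fin.lastCases_castSucc]
  have hcomp : Ψ.comp L = (mu (Fin r) n hn').comp (theta (Fin r × Fin n)) := by
    apply FreeGroup.ext_hom
    rintro (⟨i, j⟩ | u)
    · have hL1 : L (FreeGroup.of (Sum.inl (i, j))) =
          t ^ (-((j : ℕ) : ℤ)) * FreeGroup.of i.castSucc * t ^ ((j : ℕ) : ℤ) := by
        rw [hLdef, FreeGroup.lift_apply_of]; rfl
      rw [MonoidHom.comp_apply, MonoidHom.comp_apply, hL1]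
      rw [_root_.map_mul, _root_.map_mul, _root_.map_zpow, _root_.map_zpow, hΨt, hΨg]
      rw [inr_one_zpow, inr_one_zpow,
        show ((((j:ℕ)):ℤ)) = -(-((j:ℕ):ℤ)) by ring]
      rw [show (ofAdd (-(-((j:ℕ):ℤ))) : Multiplicative ℤ) = ofAdd (-(-((j:ℕ):ℤ))) from rfl]
      rw [show (-(-((j:ℕ):ℤ))) = ((j:ℕ):ℤ) by ring] at *
      rw [show (SemidirectProduct.inr (ofAdd (-((j:ℕ):ℤ))) :
            FreeGroup (Fin r × ℤ) ⋊[sig (Fin r)] Multiplicative ℤ) *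
            SemidirectProduct.inl (FreeGroup.of (i, (0:ℤ))) *
            SemidirectProduct.inr (ofAdd (((j:ℕ)):ℤ)) =
          SemidirectProduct.inl (FreeGroup.of (i, ((j:ℕ):ℤ))) from inr_conj_inl_of _ _ _]
      rw [theta, FreeGroup.lift_apply_of]
      simp only [Sum.elim_inl]
      rw [mu, SemidirectProduct.lift_inl]
      simp only [MonoidHom.comp_apply, MulEquiv.coe_toMonoidHom,
        FreeGroup.freeGroupCongr_apply, FreeGroup.map.of, eY_apply]
      norm_num
    · have hL2 : L (FreeGroup.of (Sum.inr u)) = t ^ n := by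
        rw [hLdef, FreeGroup.lift_apply_of]; rfl
      rw [MonoidHom.comp_apply, MonoidHom.comp_apply, hL2]
      rw [_root_.map_pow, hΨt, inr_one_pow]
      rw [theta, FreeGroup.lift_apply_of]
      simp only [Sum.elim_inr]
      rw [mu, SemidirectProduct.lift_inr]
      simp only [MonoidHom.comp_apply, zpowersHom_apply, toAdd_ofAdd]
      congr 1
      rw [← ofAdd_zsmul]
      simp
  have hinj : Function.Injective L := by
    have h2 : Function.Injective (Ψ.comp L) := by
      rw [hcomp]
      exact (mu_injective (Fin r) n hn').comp (theta_injective (Fin r × Fin n))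
    intro a b hab
    exact h2 (by simp only [MonoidHom.comp_apply, hab])
  refine ⟨hinj, ?_⟩
  -- the range computation
  set R := L.range with hRdef
  have hR : R = Subgroup.closure (Set.range (kummerBasis n r)) :=
    FreeGroup.range_lift_eq_closure
  have htn : t ^ (n : ℕ) ∈ R := by
    refine ⟨FreeGroup.of (Sum.inr ()), ?_⟩
    rw [hLdef, FreeGroup.lift_apply_of]; rfl
  have hgen : ∀ (i : Fin r) (j : ℤ),
      t ^ (-j) * FreeGroup.of i.castSucc * t ^ j ∈ R := by
    intro i j
    have h1 : (0:ℤ) ≤ j % n := Int.emod_nonneg j (by exact_mod_cast hn'.ne')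
    have h2 : j % n < n := Int.emod_lt_of_pos j (by exact_mod_cast hn')
    obtain ⟨s, m, hj⟩ : ∃ (s : Fin n) (m : ℤ), j = (n:ℤ) * m + ((s:ℕ):ℤ) := by
      refine ⟨⟨(j % n).toNat, by omega⟩, j / n, ?_⟩
      simp only [Int.toNat_of_nonneg h1]
      exact (Int.mul_ediv_add_emod j n).symm
    subst hj
    have hbase : t ^ (-((s:ℕ):ℤ)) * FreeGroup.of i.castSucc * t ^ ((s:ℕ):ℤ) ∈ R := by
      refine ⟨FreeGroup.of (Sum.inl (i, s)), ?_⟩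
      rw [hLdef, FreeGroup.lift_apply_of]; rfl
    have hq : t ^ ((n:ℤ) * m) ∈ R := by
      have h4 : t ^ ((n:ℤ) * m) = (t ^ (n:ℕ)) ^ m := by
        rw [← zpow_natCast t n, ← zpow_mul]
      rw [h4]
      exact zpow_mem htn _
    have key : t ^ (-((n:ℤ) * m + ((s:ℕ):ℤ))) * FreeGroup.of i.castSucc *
          t ^ ((n:ℤ) * m + ((s:ℕ):ℤ)) =
        (t ^ ((n:ℤ) * m))⁻¹ *
          (t ^ (-((s:ℕ):ℤ)) * FreeGroup.of i.castSucc * t ^ ((s:ℕ):ℤ)) *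
          t ^ ((n:ℤ) * m) := by
      group
    rw [key]
    exact mul_mem (mul_mem (inv_mem hq) hbase) hq
  have hconj : ∀ (k : ℤ) (x : FreeGroup (Fin (r+1))), x ∈ R →
      t ^ k * x * t ^ (-k) ∈ R := by
    intro k x hx
    rw [hR] at hx
    refine Subgroup.closure_induction (p := fun g _ => t ^ k * g * t ^ (-k) ∈ R)
      ?_ ?_ ?_ ?_ hx
    · rintro _ ⟨b, rfl⟩
      rcases b with ⟨i, j⟩ | u
      · have : t ^ k * kummerBasis n r (Sum.inl (i, j)) * t ^ (-k) =
            t ^ (-(((j:ℕ):ℤ) - k)) * FreeGroup.of i.castSucc * t ^ (((j:ℕ):ℤ) - k) := by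
          show t ^ k * (t ^ (-((j : ℕ) : ℤ)) * FreeGroup.of i.castSucc *
            t ^ ((j : ℕ) : ℤ)) * t ^ (-k) = _
          group
        rw [this]
        exact hgen i _
      · have : t ^ k * kummerBasis n r (Sum.inr u) * t ^ (-k) = t ^ (n:ℕ) := by
          show t ^ k * t ^ (n:ℕ) * t ^ (-k) = t ^ (n:ℕ)
          group
        rw [this]
        exact htn
    · simpa using one_mem R
    · intro a b _ _ ha hb
      have : t ^ k * (a * b) * t ^ (-k) =
          (t ^ k * a * t ^ (-k)) * (t ^ k * b * t ^ (-k)) := by group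
      rw [this]
      exact mul_mem ha hb
    · intro a _ ha
      have : t ^ k * a⁻¹ * t ^ (-k) = (t ^ k * a * t ^ (-k))⁻¹ := by group
      rw [this]
      exact inv_mem ha
  -- the exponent homomorphism
  set ε : FreeGroup (Fin (r+1)) →* Multiplicative ℤ :=
    FreeGroup.lift (fun i : Fin (r+1) => ofAdd (if (i:ℕ) < r then (0:ℤ) else 1)) with hεdef
  set ψ : Multiplicative ℤ →* Multiplicative (ZMod n) :=
    AddMonoidHom.toMultiplicative (Int.castAddHom (ZMod n)) with hψdef
  have hφε : φ = ψ.comp ε := by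
    apply FreeGroup.ext_hom
    intro i
    rw [hφ i, MonoidHom.comp_apply, hεdef, FreeGroup.lift_apply_of]
    by_cases h : (i:ℕ) < r <;> simp [h, hψdef]
  have hεt : ε t = ofAdd (1:ℤ) := by
    rw [hεdef, htdef, FreeGroup.lift_apply_of]
    simp
  have hmain : ∀ w : FreeGroup (Fin (r+1)), w * t ^ (-(toAdd (ε w))) ∈ R := by
    intro w
    induction w using FreeGroup.induction_on with
    | C1 => simpa using one_mem R
    | of x =>
      induction x using Fin.lastCases with
      | last =>
        have : ε t = ofAdd (1:ℤ) := hεt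
        rw [← htdef, this]
        simpa using one_mem R
      | cast i =>
        have hε0 : ε (FreeGroup.of i.castSucc) = ofAdd (0:ℤ) := by
          rw [hεdef, FreeGroup.lift_apply_of]
          simp [i.2]
        rw [hε0]
        have := hgen i 0
        simpa using this
    | inv_of x hx =>
      have h2 : (FreeGroup.of x)⁻¹ * t ^ (-(toAdd (ε (FreeGroup.of x)⁻¹))) =
          t ^ (-(toAdd (ε (FreeGroup.of x)))) *
            ((FreeGroup.of x) * t ^ (-(toAdd (ε (FreeGroup.of x)))))⁻¹ *
            t ^ (-(-(toAdd (ε (FreeGroup.of x))))) := by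
        rw [_root_.map_inv, toAdd_inv]
        group
      rw [_root_.map_inv]
      rw [show ε (FreeGroup.of x)⁻¹ = (ε (FreeGroup.of x))⁻¹ from _root_.map_inv ε _] at h2
      rw [h2]
      exact hconj _ _ (inv_mem hx)
    | mul x y hx hy =>
      have h1 : x * t ^ (-(toAdd (ε x))) ∈ R := hx
      have h2 : t ^ (toAdd (ε x)) * (y * t ^ (-(toAdd (ε y)))) *
          t ^ (-(toAdd (ε x))) ∈ R := hconj _ _ hy
      have h3 : (x * y) * t ^ (-(toAdd (ε (x * y)))) =
          (x * t ^ (-(toAdd (ε x)))) *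
            (t ^ (toAdd (ε x)) * (y * t ^ (-(toAdd (ε y)))) * t ^ (-(toAdd (ε x)))) := by
        rw [_root_.map_mul, toAdd_mul]
        group
      rw [h3]
      exact mul_mem h1 h2
  apply le_antisymm
  · rw [hR]
    rw [Subgroup.closure_le]
    rintro _ ⟨b, rfl⟩
    rcases b with ⟨i, j⟩ | u
    · show φ (kummerBasis n r (Sum.inl (i, j))) = 1
      show φ (t ^ (-((j : ℕ) : ℤ)) * FreeGroup.of i.castSucc * t ^ ((j : ℕ) : ℤ)) = 1
      rw [_root_.map_mul, _root_.map_mul, _root_.map_zpow, _root_.map_zpow]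
      have hg0 : φ (FreeGroup.of i.castSucc) = 1 := by
        rw [hφ]
        simp [i.2]
      rw [hg0]
      group
    · show φ (kummerBasis n r (Sum.inr u)) = 1
      show φ (t ^ (n:ℕ)) = 1
      rw [_root_.map_pow, htdef, hφ]
      rw [show ((Fin.last r : Fin (r+1)) : ℕ) = r from rfl]
      rw [if_neg (lt_irrefl r), ← ofAdd_nsmul]
      simp [ZMod.natCast_self, nsmul_eq_mul]
  · intro w hw
    have hw' : ((toAdd (ε w) : ℤ) : ZMod n) = 0 := by
      have : φ w = 1 := hw
      rw [hφε, MonoidHom.comp_apply] at this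
      have := congrArg toAdd this
      simpa [hψdef] using this
    obtain ⟨q, hq⟩ := (ZMod.intCast_zmod_eq_zero_iff_dvd _ _).mp hw'
    have htq : t ^ (toAdd (ε w)) ∈ R := by
      rw [hq]
      have : t ^ ((n:ℤ) * q) = (t ^ (n:ℕ)) ^ q := by
        rw [← zpow_natCast t n, ← zpow_mul]
      rw [this]
      exact zpow_mem htn _
    have : w = (w * t ^ (-(toAdd (ε w)))) * t ^ (toAdd (ε w)) := by group
    rw [this]
    exact mul_mem (hmain w) htq
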